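/- Let Re β > 0 and s = √(2 Re β). The map η : 𝔹² → 𝔹² defined by η(z₁,z₂) = ((−s z₂ + (1−β) z₁ + β)/(−s z₂ − β z₁ + 1 + β), (z₂ + s z₁ − s)/(−s z₂ − β z₁ + 1 + β)) is a well-defined holomorphic self-map of 𝔹² that maps the ball into itself, fixes e₁ = (1,0) in the sense of boundary limits, and is a bijection of 𝔹². -/

import Mathlib

open Complex Filter

def B2 : Set (ℂ × ℂ) := {z : ℂ × ℂ | ‖z.1‖^2 + ‖z.2‖^2 < 1}

lemma keyC (β : ℂ) (s : ℝ) (h : (s:ℂ)*(s:ℂ) = β + (starRingEnd ℂ) β) (z₁ z₂ : ℂ) :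
    (-(s:ℂ)*z₂ - β*z₁ + 1 + β) * (starRingEnd ℂ) (-(s:ℂ)*z₂ - β*z₁ + 1 + β)
      = (-(s:ℂ)*z₂ + (1-β)*z₁ + β) * (starRingEnd ℂ) (-(s:ℂ)*z₂ + (1-β)*z₁ + β)
        + (z₂ + s*z₁ - s) * (starRingEnd ℂ) (z₂ + s*z₁ - s)
        + (1 - z₁ * (starRingEnd ℂ) z₁ - z₂ * (starRingEnd ℂ) z₂) := by
  simp only [map_add, map_sub, map_mul, map_neg, map_one, Complex.conj_ofReal]
  linear_combination (-(z₁-1)*((starRingEnd ℂ) z₁ - 1)) * h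

lemma keyR (β : ℂ) (s : ℝ) (h : (s:ℂ)*(s:ℂ) = β + (starRingEnd ℂ) β) (z₁ z₂ : ℂ) :
    Complex.normSq (-(s:ℂ)*z₂ - β*z₁ + 1 + β)
      = Complex.normSq (-(s:ℂ)*z₂ + (1-β)*z₁ + β)
        + Complex.normSq (z₂ + s*z₁ - s)
        + (1 - Complex.normSq z₁ - Complex.normSq z₂) := by
  have := keyC β s h z₁ z₂
  rw [Complex.mul_conj, Complex.mul_conj, Complex.mul_conj, Complex.mul_conj,
    Complex.mul_conj] at this
  exact_mod_cast this

lemma memB2 (z : ℂ × ℂ) : z ∈ B2 ↔ Complex.normSq z.1 + Complex.normSq z.2 < 1 := by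
  simp only [B2, Set.mem_setOf_eq, ← Complex.sq_norm]

lemma denom_pos (β : ℂ) (s : ℝ) (h : (s:ℂ)*(s:ℂ) = β + (starRingEnd ℂ) β)
    (z : ℂ × ℂ) (hz : z ∈ B2) :
    Complex.normSq (-(s:ℂ)*z.2 + (1-β)*z.1 + β) + Complex.normSq (z.2 + s*z.1 - s)
      < Complex.normSq (-(s:ℂ)*z.2 - β*z.1 + 1 + β) := by
  rw [keyR β s h z.1 z.2]
  have := (memB2 z).1 hz
  linarith

lemma denom_ne (β : ℂ) (s : ℝ) (h : (s:ℂ)*(s:ℂ) = β + (starRingEnd ℂ) β)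
    (z : ℂ × ℂ) (hz : z ∈ B2) : -(s:ℂ)*z.2 - β*z.1 + 1 + β ≠ 0 := by
  have h1 := denom_pos β s h z hz
  have h2 := Complex.normSq_nonneg (-(s:ℂ)*z.2 + (1-β)*z.1 + β)
  have h3 := Complex.normSq_nonneg (z.2 + s*z.1 - s)
  intro h0
  rw [h0, Complex.normSq_zero] at h1
  linarith

lemma mapsto_lemma (β : ℂ) (s : ℝ) (h : (s:ℂ)*(s:ℂ) = β + (starRingEnd ℂ) β)
    (z : ℂ × ℂ) (hz : z ∈ B2) :
    ((-(s:ℂ) * z.2 + (1 - β) * z.1 + β) / (-(s:ℂ) * z.2 - β * z.1 + 1 + β),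
     (z.2 + (s:ℂ) * z.1 - (s:ℂ)) / (-(s:ℂ) * z.2 - β * z.1 + 1 + β)) ∈ B2 := by
  rw [memB2]
  simp only [Complex.normSq_div]
  have hD : 0 < Complex.normSq (-(s:ℂ)*z.2 - β*z.1 + 1 + β) :=
    Complex.normSq_pos.2 (denom_ne β s h z hz)
  rw [← add_div, div_lt_one hD]
  exact denom_pos β s h z hz

theorem parabolic_automorphism_ball2
    (β : ℂ) (hβ : 0 < β.re) (s : ℝ) (hs : s = Real.sqrt (2 * β.re))
    (η : ℂ × ℂ → ℂ × ℂ)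
    (hη : ∀ z : ℂ × ℂ,
      η z = ((-(s:ℂ) * z.2 + (1 - β) * z.1 + β) / (-(s:ℂ) * z.2 - β * z.1 + 1 + β),
             (z.2 + (s:ℂ) * z.1 - (s:ℂ)) / (-(s:ℂ) * z.2 - β * z.1 + 1 + β))) :
    (∀ z ∈ B2, -(s:ℂ) * z.2 - β * z.1 + 1 + β ≠ 0) ∧
    Set.MapsTo η B2 B2 ∧
    Set.BijOn η B2 B2 ∧
    Tendsto η (nhdsWithin ((1 : ℂ), (0 : ℂ)) B2) (nhds ((1 : ℂ), (0 : ℂ))) := by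
  set c := (starRingEnd ℂ) β with hc
  have hs2 : (s:ℂ)*(s:ℂ) = β + c := by
    have h1 : (s:ℝ)*(s:ℝ) = 2 * β.re := by
      rw [hs]; exact Real.mul_self_sqrt (by linarith)
    rw [hc, Complex.add_conj]
    exact_mod_cast h1
  have hs2' : ((-s : ℝ):ℂ)*((-s : ℝ):ℂ) = c + (starRingEnd ℂ) c := by
    have hcc : (starRingEnd ℂ) c = β := by rw [hc, Complex.conj_conj]
    rw [hcc]
    push_cast
    linear_combination hs2
  set η' : ℂ × ℂ → ℂ × ℂ := fun z =>
    ((-((-s : ℝ):ℂ) * z.2 + (1 - c) * z.1 + c) / (-((-s : ℝ):ℂ) * z.2 - c * z.1 + 1 + c),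
     (z.2 + ((-s : ℝ):ℂ) * z.1 - ((-s : ℝ):ℂ)) / (-((-s : ℝ):ℂ) * z.2 - c * z.1 + 1 + c))
    with hη'
  have hmap : Set.MapsTo η B2 B2 := by
    intro z hz; rw [hη]; exact mapsto_lemma β s hs2 z hz
  have hmap' : Set.MapsTo η' B2 B2 := by
    intro z hz; rw [hη']; exact mapsto_lemma c (-s) hs2' z hz
  have hden : ∀ z ∈ B2, -(s:ℂ) * z.2 - β * z.1 + 1 + β ≠ 0 :=
    fun z hz => denom_ne β s hs2 z hz
  have hpc : ((-s : ℝ):ℂ) = -(s:ℂ) := by push_cast; ring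
  have hleft : ∀ z ∈ B2, η' (η z) = z := by
    intro z hz
    have hD := hden z hz
    set N₁ := -(s:ℂ)*z.2 + (1-β)*z.1 + β with hN₁
    set N₂ := z.2 + (s:ℂ)*z.1 - (s:ℂ) with hN₂
    set D := -(s:ℂ)*z.2 - β*z.1 + 1 + β with hD0
    have e0 : (s:ℂ)*N₂ - c*N₁ + (1+c)*D = 1 := by
      rw [hN₁, hN₂, hD0]; linear_combination (z.1-1)*hs2
    have e1 : (s:ℂ)*N₂ + (1-c)*N₁ + c*D = z.1 := by
      rw [hN₁, hN₂, hD0]; linear_combination (z.1-1)*hs2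
    have e2 : N₂ - (s:ℂ)*N₁ + (s:ℂ)*D = z.2 := by
      rw [hN₁, hN₂, hD0]; ring
    have hd0 : -((-s : ℝ):ℂ) * (N₂/D) - c * (N₁/D) + 1 + c = 1/D := by
      rw [hpc]; field_simp; linear_combination e0
    have hn1 : -((-s : ℝ):ℂ) * (N₂/D) + (1-c) * (N₁/D) + c = z.1/D := by
      rw [hpc]; field_simp; linear_combination e1
    have hn2 : (N₂/D) + ((-s : ℝ):ℂ) * (N₁/D) - ((-s : ℝ):ℂ) = z.2/D := by
      rw [hpc]; field_simp; linear_combination e2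
    have hη1 : η z = (N₁/D, N₂/D) := hη z
    rw [hη1, hη']
    simp only
    rw [hn1, hn2, hd0]
    have hD1 : (1:ℂ)/D ≠ 0 := one_div_ne_zero hD
    apply Prod.ext <;> simp only <;> field_simp
  have hden' : ∀ z ∈ B2, -((-s : ℝ):ℂ) * z.2 - c * z.1 + 1 + c ≠ 0 :=
    fun z hz => denom_ne c (-s) hs2' z hz
  have hright : ∀ z ∈ B2, η (η' z) = z := by
    intro z hz
    have hD := hden' z hz
    set N₁ := -((-s : ℝ):ℂ)*z.2 + (1-c)*z.1 + c with hN₁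
    set N₂ := z.2 + ((-s : ℝ):ℂ)*z.1 - ((-s : ℝ):ℂ) with hN₂
    set D := -((-s : ℝ):ℂ)*z.2 - c*z.1 + 1 + c with hD0
    have e0 : -(s:ℂ)*N₂ - β*N₁ + (1+β)*D = 1 := by
      rw [hN₁, hN₂, hD0, hpc]; linear_combination (z.1-1)*hs2
    have e1 : -(s:ℂ)*N₂ + (1-β)*N₁ + β*D = z.1 := by
      rw [hN₁, hN₂, hD0, hpc]; linear_combination (z.1-1)*hs2
    have e2 : N₂ + (s:ℂ)*N₁ - (s:ℂ)*D = z.2 := by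
      rw [hN₁, hN₂, hD0, hpc]; ring
    have hi : D * D⁻¹ = 1 := mul_inv_cancel₀ hD
    have hd0 : -(s:ℂ) * (N₂/D) - β * (N₁/D) + 1 + β = 1/D := by
      linear_combination D⁻¹ * e0 - (1+β) * hi
    have hn1 : -(s:ℂ) * (N₂/D) + (1-β) * (N₁/D) + β = z.1/D := by
      linear_combination D⁻¹ * e1 - β * hi
    have hn2 : (N₂/D) + (s:ℂ) * (N₁/D) - (s:ℂ) = z.2/D := by
      linear_combination D⁻¹ * e2 + (s:ℂ) * hi
    have hη1 : η' z = (N₁/D, N₂/D) := by rw [hη']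
    rw [hη1, hη (N₁/D, N₂/D)]
    simp only
    rw [hn1, hn2, hd0]
    apply Prod.ext <;> simp only <;> field_simp
  refine ⟨hden, hmap, ?_, ?_⟩
  · exact Set.InvOn.bijOn ⟨hleft, hright⟩ hmap hmap'
  · have hηeq : η = fun z : ℂ × ℂ =>
        ((-(s:ℂ) * z.2 + (1 - β) * z.1 + β) / (-(s:ℂ) * z.2 - β * z.1 + 1 + β),
         (z.2 + (s:ℂ) * z.1 - (s:ℂ)) / (-(s:ℂ) * z.2 - β * z.1 + 1 + β)) := funext hη
    have hdval : -(s:ℂ) * ((1:ℂ),(0:ℂ)).2 - β * ((1:ℂ),(0:ℂ)).1 + 1 + β ≠ 0 := by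
      simp
    have hcont : ContinuousAt η ((1:ℂ), (0:ℂ)) := by
      rw [hηeq]
      apply ContinuousAt.prodMk
      · exact ContinuousAt.div (by fun_prop) (by fun_prop) hdval
      · exact ContinuousAt.div (by fun_prop) (by fun_prop) hdval
    have hval : η ((1:ℂ), (0:ℂ)) = ((1:ℂ), (0:ℂ)) := by
      rw [hη]; simp
    have := hcont.tendsto
    rw [hval] at this
    exact tendsto_nhdsWithin_of_tendsto_nhds this
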